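/- For all λ > 0 and τ > 0, (1+τ)^{-1} ∫₀^∞ exp( −2πλ ∫_h^∞ (τ h⁴ u)/(u⁴ + τ h⁴) du ) · 4πλ^{3/2} h² e^{−λπh²} dh = (1+τ)^{-1} (1 + √τ · arctan(√τ))^{−3/2}; in particular the left-hand side does not depend on λ. -/

import Mathlib

open MeasureTheory Set

lemma inner_integral_eq {τ h : ℝ} (hτ : 0 < τ) (hh : 0 < h) :
    ∫ u in Ioi h, τ * h ^ 4 * u / (u ^ 4 + τ * h ^ 4) =
      Real.sqrt τ * h ^ 2 / 2 * Real.arctan (Real.sqrt τ) := by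
  set c : ℝ := Real.sqrt τ * h ^ 2 with hc_def
  have hst : 0 < Real.sqrt τ := Real.sqrt_pos.mpr hτ
  have hc : 0 < c := by positivity
  have hc2 : c ^ 2 = τ * h ^ 4 := by
    rw [hc_def, mul_pow, Real.sq_sqrt hτ.le]; ring
  set g : ℝ → ℝ := fun u => c / 2 * Real.arctan (u ^ 2 / c) with hg_def
  have hderiv : ∀ x ∈ Ioi h, HasDerivAt g (τ * h ^ 4 * x / (x ^ 4 + τ * h ^ 4)) x := by
    intro x _
    have h1 : HasDerivAt (fun u : ℝ => u ^ 2 / c) (2 * x / c) x := by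
      simpa using (hasDerivAt_pow 2 x).div_const c
    have h2 := ((Real.hasDerivAt_arctan (x ^ 2 / c)).comp x h1).const_mul (c / 2)
    refine h2.congr_deriv ?_
    have hpos : (0:ℝ) < 1 + (x ^ 2 / c) ^ 2 := by positivity
    have hden : (0:ℝ) < x ^ 4 + τ * h ^ 4 := by positivity
    rw [← hc2]
    field_simp
    ring
  have hnonneg : ∀ x ∈ Ioi h, 0 ≤ τ * h ^ 4 * x / (x ^ 4 + τ * h ^ 4) := by
    intro x hx
    have hx0 : 0 < x := hh.trans hx
    positivity
  have hcont : ContinuousWithinAt g (Ici h) h :=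
    ((continuous_const.mul (Real.continuous_arctan.comp
      ((continuous_pow 2).div_const c))).continuousWithinAt)
  have htend : Filter.Tendsto g Filter.atTop (nhds (c / 2 * (Real.pi / 2))) := by
    apply Filter.Tendsto.const_mul
    have h1 : Filter.Tendsto (fun u : ℝ => u ^ 2 / c) Filter.atTop Filter.atTop :=
      (Filter.tendsto_pow_atTop (by norm_num)).atTop_div_const hc
    exact (Real.tendsto_arctan_atTop.mono_right nhdsWithin_le_nhds).comp h1
  rw [integral_Ioi_of_hasDerivAt_of_nonneg hcont hderiv hnonneg htend]
  have hgh : g h = c / 2 * (Real.pi / 2 - Real.arctan (Real.sqrt τ)) := by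
    rw [hg_def]
    simp only
    rw [show h ^ 2 / c = (Real.sqrt τ)⁻¹ by
      rw [hc_def]; field_simp,
      Real.arctan_inv_of_pos hst]
  rw [hgh, hc_def]
  ring

theorem stmt_1 (lam τ : ℝ) (hlam : 0 < lam) (hτ : 0 < τ) :
    (1 + τ)⁻¹ *
        ∫ h in Ioi (0:ℝ),
          Real.exp (-(2 * Real.pi * lam * ∫ u in Ioi h, τ * h ^ 4 * u / (u ^ 4 + τ * h ^ 4))) *
            (4 * Real.pi * lam ^ ((3:ℝ)/2) * h ^ 2 * Real.exp (-(lam * Real.pi * h ^ 2))) =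
      (1 + τ)⁻¹ * (1 + Real.sqrt τ * Real.arctan (Real.sqrt τ)) ^ (-(3:ℝ)/2) := by
  have hπ := Real.pi_pos
  set s : ℝ := Real.sqrt τ * Real.arctan (Real.sqrt τ) with hs_def
  have hs : 0 ≤ s := by
    have h0 : (0:ℝ) ≤ Real.arctan (Real.sqrt τ) := by
      rw [← Real.arctan_zero]
      exact Real.arctan_strictMono.monotone (Real.sqrt_nonneg τ)
    positivity
  set b : ℝ := lam * Real.pi * (1 + s) with hb_def
  have hb : 0 < b := by positivity
  have hcongr : ∫ h in Ioi (0:ℝ),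
      Real.exp (-(2 * Real.pi * lam * ∫ u in Ioi h, τ * h ^ 4 * u / (u ^ 4 + τ * h ^ 4))) *
        (4 * Real.pi * lam ^ ((3:ℝ)/2) * h ^ 2 * Real.exp (-(lam * Real.pi * h ^ 2))) =
      ∫ h in Ioi (0:ℝ),
        4 * Real.pi * lam ^ ((3:ℝ)/2) * (h ^ ((2:ℝ)) * Real.exp (-b * h ^ ((2:ℝ)))) := by
    refine setIntegral_congr_fun measurableSet_Ioi (fun h hh => ?_)
    have hh0 : (0:ℝ) < h := hh
    rw [inner_integral_eq hτ hh0, Real.rpow_two,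
      show -b * h ^ 2 = -(2 * Real.pi * lam * (Real.sqrt τ * h ^ 2 / 2 *
        Real.arctan (Real.sqrt τ))) + -(lam * Real.pi * h ^ 2) by rw [hb_def, hs_def]; ring,
      Real.exp_add]
    ring
  rw [hcongr, integral_const_mul, integral_rpow_mul_exp_neg_mul_rpow (by norm_num)
    (by norm_num) hb]
  have hG : Real.Gamma ((2 + 1) / 2) = Real.sqrt Real.pi / 2 := by
    rw [show ((2:ℝ) + 1) / 2 = 1/2 + 1 by norm_num, Real.Gamma_add_one (by norm_num),
      Real.Gamma_one_half_eq]
    ring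
  rw [hG]
  have hbr : b ^ (-(2 + 1) / 2 : ℝ) = lam ^ (-(3:ℝ)/2) * Real.pi ^ (-(3:ℝ)/2) *
      (1 + s) ^ (-(3:ℝ)/2) := by
    rw [hb_def, Real.mul_rpow (by positivity) (by positivity),
      Real.mul_rpow hlam.le hπ.le]
    norm_num
  rw [hbr]
  have h1 : lam ^ ((3:ℝ)/2) * lam ^ (-(3:ℝ)/2) = 1 := by
    rw [← Real.rpow_add hlam]; norm_num
  have h2 : Real.pi * Real.pi ^ (-(3:ℝ)/2) * Real.sqrt Real.pi = 1 := by
    rw [Real.sqrt_eq_rpow,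
      show Real.pi * Real.pi ^ (-(3:ℝ)/2) * Real.pi ^ ((1:ℝ)/2)
        = Real.pi ^ ((1:ℝ)) * Real.pi ^ (-(3:ℝ)/2) * Real.pi ^ ((1:ℝ)/2) by rw [Real.rpow_one],
      ← Real.rpow_add hπ, ← Real.rpow_add hπ]
    norm_num
  calc (1 + τ)⁻¹ * (4 * Real.pi * lam ^ ((3:ℝ)/2) *
        (lam ^ (-(3:ℝ)/2) * Real.pi ^ (-(3:ℝ)/2) * (1 + s) ^ (-(3:ℝ)/2) * (1 / 2) *
          (Real.sqrt Real.pi / 2)))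
      = (1 + τ)⁻¹ * ((lam ^ ((3:ℝ)/2) * lam ^ (-(3:ℝ)/2)) *
          (Real.pi * Real.pi ^ (-(3:ℝ)/2) * Real.sqrt Real.pi) * (1 + s) ^ (-(3:ℝ)/2)) := by
        ring
    _ = (1 + τ)⁻¹ * (1 + s) ^ (-(3:ℝ)/2) := by rw [h1, h2]; ring
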